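/- For every r ∈ ℂ, the Casimir operator of osp(1|2) acts as zero on U_0^{osp}(r); that is, as endomorphisms of U_0^{osp}(r) one has E∘F + F∘E + (1/2)·H∘H + (1/2)·(Y∘X − X∘Y) = 0. -/
import Mathlib


/-!
The `osp(1|2)`-module `U_0^{osp}(r)`: underlying space `(ℤ ⊕ ℤ) →₀ ℂ`, where
`Sum.inl i` encodes the basis vector `E_i` and `Sum.inr i` encodes the basis
vector `E_{i−1/2}`.
-/

/-- `E·E_i = E_{i−1}`, `E·E_{i−1/2} = E_{i−3/2}`. -/
noncomputable def Eosp : Module.End ℂ ((ℤ ⊕ ℤ) →₀ ℂ) :=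
  Finsupp.lift ((ℤ ⊕ ℤ) →₀ ℂ) ℂ (ℤ ⊕ ℤ)
    (Sum.elim (fun i => Finsupp.single (Sum.inl (i - 1)) 1)
              (fun i => Finsupp.single (Sum.inr (i - 1)) 1))

/-- `H·E_i = −(2i+2r+1)·E_i`, `H·E_{i−1/2} = −(2i+2r)·E_{i−1/2}`. -/
noncomputable def Hosp (r : ℂ) : Module.End ℂ ((ℤ ⊕ ℤ) →₀ ℂ) :=
  Finsupp.lift ((ℤ ⊕ ℤ) →₀ ℂ) ℂ (ℤ ⊕ ℤ)
    (Sum.elim (fun i => (-(2 * (i : ℂ) + 2 * r + 1)) • Finsupp.single (Sum.inl i) 1)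
              (fun i => (-(2 * (i : ℂ) + 2 * r)) • Finsupp.single (Sum.inr i) 1))

/-- `F·E_i = −(r+i+1)²·E_{i+1}`, `F·E_{i−1/2} = −(r+i+1)(r+i)·E_{i+1/2}`. -/
noncomputable def Fosp (r : ℂ) : Module.End ℂ ((ℤ ⊕ ℤ) →₀ ℂ) :=
  Finsupp.lift ((ℤ ⊕ ℤ) →₀ ℂ) ℂ (ℤ ⊕ ℤ)
    (Sum.elim
      (fun i => (-((r + (i : ℂ) + 1) ^ 2)) • Finsupp.single (Sum.inl (i + 1)) 1)
      (fun i => (-((r + (i : ℂ) + 1) * (r + (i : ℂ)))) • Finsupp.single (Sum.inr (i + 1)) 1))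

/-- `X·E_i = E_{i−1/2}`, `X·E_{i−1/2} = E_{i−1}`. -/
noncomputable def Xosp : Module.End ℂ ((ℤ ⊕ ℤ) →₀ ℂ) :=
  Finsupp.lift ((ℤ ⊕ ℤ) →₀ ℂ) ℂ (ℤ ⊕ ℤ)
    (Sum.elim (fun i => Finsupp.single (Sum.inr i) 1)
              (fun i => Finsupp.single (Sum.inl (i - 1)) 1))

/-- `Y·E_i = −(r+i+1)·E_{i+1/2}`, `Y·E_{i−1/2} = −(r+i)·E_i`. -/
noncomputable def Yosp (r : ℂ) : Module.End ℂ ((ℤ ⊕ ℤ) →₀ ℂ) :=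
  Finsupp.lift ((ℤ ⊕ ℤ) →₀ ℂ) ℂ (ℤ ⊕ ℤ)
    (Sum.elim (fun i => (-(r + (i : ℂ) + 1)) • Finsupp.single (Sum.inr (i + 1)) 1)
              (fun i => (-(r + (i : ℂ))) • Finsupp.single (Sum.inl i) 1))


/-- The Casimir operator `E∘F + F∘E + (1/2)·H∘H + (1/2)·(Y∘X − X∘Y)` of `osp(1|2)`
acts as zero on `U_0^{osp}(r)`. -/
theorem casimir_zero_on_U0osp (r : ℂ) :
    Eosp * Fosp r + Fosp r * Eosp + (1/2 : ℂ) • (Hosp r * Hosp r)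
      + (1/2 : ℂ) • (Yosp r * Xosp - Xosp * Yosp r) = 0 := by
  apply Finsupp.lhom_ext
  intro a b
  have h : ∀ a, (Eosp * Fosp r + Fosp r * Eosp + (1/2 : ℂ) • (Hosp r * Hosp r)
      + (1/2 : ℂ) • (Yosp r * Xosp - Xosp * Yosp r)) (Finsupp.single a 1) = 0 := by
    rintro (i | i) <;>
    · simp only [Eosp, Fosp, Hosp, Xosp, Yosp, LinearMap.add_apply, LinearMap.smul_apply,
        LinearMap.sub_apply, Module.End.mul_apply, LinearMap.zero_apply,
        Finsupp.lift_apply, Finsupp.sum_single_index, zero_smul, map_smul,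
        Sum.elim_inl, Sum.elim_inr, one_smul, smul_smul, Finsupp.smul_single,
        smul_eq_mul, mul_one, add_sub_cancel_right, sub_add_cancel,
        Finsupp.zero_apply]
      rw [← Finsupp.single_sub, Finsupp.smul_single, ← Finsupp.single_add,
        ← Finsupp.single_add, ← Finsupp.single_add, Finsupp.single_eq_zero]
      push_cast
      simp only [smul_eq_mul]
      ring
  have hb : Finsupp.single a b = b • Finsupp.single a (1 : ℂ) := by
    simp [Finsupp.smul_single]
  simp only [hb, map_smul, h a, smul_zero, LinearMap.zero_apply]
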